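/- arXiv:1910.03016 — 4 statements merged into one kernel-verified Lean document; each statement's English description precedes it below -/
import Mathlib

section
/- For any integer n > 2 and real ε ∈ (0,1), there exists a set of n unit vectors p₀, ..., p_{n-1} in ℝ^d with d = ⌈8 ln n / ε²⌉ such that every vector has Euclidean norm 1 and for any i ≠ j, the absolute value of the inner product ⟨p_i, p_j⟩ is at most ε. -/
open Finset Real

namespace JLAux

def sg (b : Bool) : ℝ := if b then 1 else -1

lemma sg_mul (x y : Bool) : sg x * sg y = sg (x == y) := by
  cases x <;> cases y <;> simp [sg]

lemma sg_sq (b : Bool) : sg b ^ 2 = 1 := by cases b <;> simp [sg]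

def Ssum (d : ℕ) (z : Fin d → Bool) : ℝ := ∑ k, sg (z k)

lemma mgf (d : ℕ) (t : ℝ) :
    ∑ z : Fin d → Bool, Real.exp (t * Ssum d z) = (Real.exp t + Real.exp (-t)) ^ d := by
  have h1 : ∀ z : Fin d → Bool, Real.exp (t * Ssum d z) = ∏ k, Real.exp (t * sg (z k)) := by
    intro z
    rw [Ssum, Finset.mul_sum, Real.exp_sum]
  simp_rw [h1]
  rw [← Fintype.prod_sum (fun _ b => Real.exp (t * sg b))]
  have h2 : ∀ k : Fin d, ∑ b : Bool, Real.exp (t * sg b) = Real.exp t + Real.exp (-t) := by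
    intro k
    rw [Fintype.sum_bool]
    norm_num [sg]
  rw [Finset.prod_congr rfl (fun k _ => h2 k), Finset.prod_const, Finset.card_univ,
    Fintype.card_fin]

lemma tail_ge (d : ℕ) (a t : ℝ) (ht : 0 ≤ t) :
    ((univ.filter (fun z : Fin d → Bool => a ≤ Ssum d z)).card : ℝ) * Real.exp (t * a)
      ≤ (Real.exp t + Real.exp (-t)) ^ d := by
  rw [← mgf d t, ← nsmul_eq_mul, ← Finset.sum_const]
  calc ∑ _z ∈ univ.filter (fun z : Fin d → Bool => a ≤ Ssum d z), Real.exp (t * a)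
      ≤ ∑ z ∈ univ.filter (fun z : Fin d → Bool => a ≤ Ssum d z), Real.exp (t * Ssum d z) :=
        Finset.sum_le_sum (fun z hz => Real.exp_le_exp.2
          (mul_le_mul_of_nonneg_left (Finset.mem_filter.1 hz).2 ht))
    _ ≤ ∑ z : Fin d → Bool, Real.exp (t * Ssum d z) :=
        Finset.sum_le_sum_of_subset_of_nonneg (Finset.filter_subset _ _)
          (fun z _ _ => (Real.exp_pos _).le)

lemma tail_le (d : ℕ) (a t : ℝ) (ht : 0 ≤ t) :
    ((univ.filter (fun z : Fin d → Bool => Ssum d z ≤ -a)).card : ℝ) * Real.exp (t * a)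
      ≤ (Real.exp t + Real.exp (-t)) ^ d := by
  have := mgf d (-t)
  rw [neg_neg, add_comm] at this
  rw [← this, ← nsmul_eq_mul, ← Finset.sum_const]
  calc ∑ _z ∈ univ.filter (fun z : Fin d → Bool => Ssum d z ≤ -a), Real.exp (t * a)
      ≤ ∑ z ∈ univ.filter (fun z : Fin d → Bool => Ssum d z ≤ -a), Real.exp (-t * Ssum d z) := by
        refine Finset.sum_le_sum (fun z hz => Real.exp_le_exp.2 ?_)
        have h := (Finset.mem_filter.1 hz).2
        nlinarith [mul_le_mul_of_nonneg_left h ht]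
    _ ≤ ∑ z : Fin d → Bool, Real.exp (-t * Ssum d z) :=
        Finset.sum_le_sum_of_subset_of_nonneg (Finset.filter_subset _ _)
          (fun z _ _ => (Real.exp_pos _).le)

lemma tail_abs (d : ℕ) (a t : ℝ) (ht : 0 ≤ t) :
    ((univ.filter (fun z : Fin d → Bool => a ≤ |Ssum d z|)).card : ℝ) * Real.exp (t * a)
      ≤ 2 * (Real.exp t + Real.exp (-t)) ^ d := by
  have hsub : (univ.filter (fun z : Fin d → Bool => a ≤ |Ssum d z|)) ⊆
      (univ.filter (fun z : Fin d → Bool => a ≤ Ssum d z)) ∪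
      (univ.filter (fun z : Fin d → Bool => Ssum d z ≤ -a)) := by
    intro z hz
    have h := (Finset.mem_filter.1 hz).2
    rcases le_abs.1 h with h1 | h1
    · exact Finset.mem_union_left _ (Finset.mem_filter.2 ⟨Finset.mem_univ _, h1⟩)
    · exact Finset.mem_union_right _ (Finset.mem_filter.2 ⟨Finset.mem_univ _, by linarith⟩)
  have hcard : ((univ.filter (fun z : Fin d → Bool => a ≤ |Ssum d z|)).card : ℝ) ≤
      ((univ.filter (fun z : Fin d → Bool => a ≤ Ssum d z)).card : ℝ) +
      ((univ.filter (fun z : Fin d → Bool => Ssum d z ≤ -a)).card : ℝ) := by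
    have := (Finset.card_le_card hsub).trans (Finset.card_union_le _ _)
    exact_mod_cast this
  have h1 := tail_ge d a t ht
  have h2 := tail_le d a t ht
  nlinarith [Real.exp_pos (t * a),
    mul_le_mul_of_nonneg_right hcard (Real.exp_pos (t * a)).le]

set_option maxHeartbeats 1000000 in
lemma count_coord (d n : ℕ) (j : Fin n) (B : Finset (Fin d → Bool)) :
    (univ.filter (fun p : Fin n → Fin d → Bool => p j ∈ B)).card
      = B.card * (2 ^ d) ^ (n - 1) := by
  classical
  rw [Finset.card_filter]
  have h1 : ∀ p : Fin n → Fin d → Bool,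
      (if p j ∈ B then 1 else 0) = ∏ k, (fun (k : Fin n) (v : Fin d → Bool) =>
        if k = j then (if v ∈ B then 1 else 0) else 1) k (p k) := by
    intro p
    rw [Finset.prod_eq_single j (fun k _ hk => by simp [hk]) (by simp)]
    simp
  calc ∑ p : Fin n → Fin d → Bool, (if p j ∈ B then 1 else 0)
      = ∑ p : Fin n → Fin d → Bool, ∏ k, (fun (k : Fin n) (v : Fin d → Bool) =>
          if k = j then (if v ∈ B then 1 else 0) else 1) k (p k) :=
        Finset.sum_congr rfl (fun p _ => h1 p)
    _ = ∏ k : Fin n, ∑ v : Fin d → Bool, (fun (k : Fin n) (v : Fin d → Bool) =>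
          if k = j then (if v ∈ B then 1 else 0) else 1) k v :=
        (Fintype.prod_sum (fun (k : Fin n) (v : Fin d → Bool) =>
          if k = j then (if v ∈ B then 1 else 0) else 1)).symm
    _ = B.card * (2 ^ d) ^ (n - 1) := by
        rw [← Finset.mul_prod_erase univ _ (Finset.mem_univ j)]
        congr 1
        · simp only [eq_self_iff_true, if_true]
          rw [Finset.sum_ite_mem, Finset.univ_inter, Finset.sum_const, smul_eq_mul, mul_one]
        · have hterm : ∀ k ∈ univ.erase j, (∑ v : Fin d → Bool,
              (if k = j then (if v ∈ B then 1 else 0) else 1)) = 2 ^ d := by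
            intro k hk
            have hkj : k ≠ j := (Finset.mem_erase.1 hk).1
            simp [hkj, Finset.card_univ, Fintype.card_fun]
          rw [Finset.prod_congr rfl hterm, Finset.prod_const,
            Finset.card_erase_of_mem (Finset.mem_univ j), Finset.card_univ, Fintype.card_fin]

lemma beq_cancel (x y : Bool) : (x == (x == y)) = y := by
  cases x <;> cases y <;> rfl

def flipAt {d n : ℕ} (i j : Fin n) (p : Fin n → Fin d → Bool) : Fin n → Fin d → Bool :=
  Function.update p j (fun t => p i t == p j t)

lemma flipAt_i {d n : ℕ} {i j : Fin n} (hij : i ≠ j) (p : Fin n → Fin d → Bool) :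
    flipAt i j p i = p i := Function.update_of_ne hij _ _

lemma flipAt_j {d n : ℕ} {i j : Fin n} (p : Fin n → Fin d → Bool) :
    flipAt i j p j = fun t => p i t == p j t := Function.update_self _ _ _

lemma flipAt_invol {d n : ℕ} {i j : Fin n} (hij : i ≠ j) (p : Fin n → Fin d → Bool) :
    flipAt i j (flipAt i j p) = p := by
  funext k
  by_cases hk : k = j
  · subst hk
    rw [flipAt_j, flipAt_i hij, flipAt_j]
    exact funext (fun t => beq_cancel _ _)
  · simp only [flipAt]
    rw [Function.update_of_ne hk]
    exact Function.update_of_ne hk _ _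

lemma count_pair (d n : ℕ) (i j : Fin n) (hij : i ≠ j) (B : Finset (Fin d → Bool)) :
    (univ.filter (fun p : Fin n → Fin d → Bool => (fun t => p i t == p j t) ∈ B)).card
      = (univ.filter (fun p : Fin n → Fin d → Bool => p j ∈ B)).card := by
  classical
  refine Finset.card_bij' (fun p _ => flipAt i j p) (fun p _ => flipAt i j p) ?_ ?_ ?_ ?_
  · intro p hp
    simp only [Finset.mem_filter, Finset.mem_univ, true_and] at hp ⊢
    rwa [flipAt_j]
  · intro p hp
    simp only [Finset.mem_filter, Finset.mem_univ, true_and] at hp ⊢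
    have : (fun t => flipAt i j p i t == flipAt i j p j t) = p j := by
      rw [flipAt_i hij, flipAt_j]
      exact funext (fun t => beq_cancel (p i t) (p j t))
    rwa [this]
  · intro p _
    exact flipAt_invol hij p
  · intro p _
    exact flipAt_invol hij p

lemma exists_good (d n : ℕ) (hn : 0 < n) (B : Finset (Fin d → Bool))
    (hB : (B.card : ℝ) * (n : ℝ) ^ 2 < (2 : ℝ) ^ d) :
    ∃ p : Fin n → Fin d → Bool, ∀ i j : Fin n, i ≠ j → (fun t => p i t == p j t) ∉ B := by
  classical
  set T : Finset (Fin n → Fin d → Bool) :=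
    univ.filter (fun p => ∃ i j : Fin n, i ≠ j ∧ (fun t => p i t == p j t) ∈ B) with hT
  have hsub : T ⊆ (univ : Finset (Fin n)).offDiag.biUnion
      (fun ij => univ.filter (fun p : Fin n → Fin d → Bool =>
        (fun t => p ij.1 t == p ij.2 t) ∈ B)) := by
    intro p hp
    obtain ⟨i, j, hij, hm⟩ := (Finset.mem_filter.1 hp).2
    exact Finset.mem_biUnion.2 ⟨(i, j), Finset.mem_offDiag.2 ⟨Finset.mem_univ _,
      Finset.mem_univ _, hij⟩, Finset.mem_filter.2 ⟨Finset.mem_univ _, hm⟩⟩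
  have hcardT : T.card ≤ n ^ 2 * (B.card * (2 ^ d) ^ (n - 1)) := by
    refine le_trans (Finset.card_le_card hsub) (le_trans (Finset.card_biUnion_le) ?_)
    have h1 : ∀ ij ∈ (univ : Finset (Fin n)).offDiag,
        (univ.filter (fun p : Fin n → Fin d → Bool =>
          (fun t => p ij.1 t == p ij.2 t) ∈ B)).card = B.card * (2 ^ d) ^ (n - 1) := by
      intro ij hij
      have hne : ij.1 ≠ ij.2 := (Finset.mem_offDiag.1 hij).2.2
      rw [count_pair d n ij.1 ij.2 hne B, count_coord d n ij.2 B]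
    rw [Finset.sum_congr rfl h1, Finset.sum_const, smul_eq_mul]
    have : ((univ : Finset (Fin n)).offDiag).card ≤ n ^ 2 := by
      rw [Finset.offDiag_card, Finset.card_univ, Fintype.card_fin]
      calc n * n - n ≤ n * n := Nat.sub_le _ _
        _ = n ^ 2 := (sq n).symm
    exact Nat.mul_le_mul_right _ this
  have hcardU : (univ : Finset (Fin n → Fin d → Bool)).card = (2 ^ d) ^ n := by
    simp [Fintype.card_fun]
  have hlt : T.card < (univ : Finset (Fin n → Fin d → Bool)).card := by
    rw [hcardU]
    have hn1 : 1 ≤ n := hn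
    have hpow : (2 ^ d) ^ n = 2 ^ d * (2 ^ d) ^ (n - 1) := by
      conv_lhs => rw [← Nat.succ_pred_eq_of_pos hn, pow_succ']
      rfl
    rw [hpow]
    have key : (n : ℝ) ^ 2 * ((B.card : ℝ) * ((2 : ℝ) ^ d) ^ (n - 1))
        < (2 : ℝ) ^ d * ((2 : ℝ) ^ d) ^ (n - 1) := by
      have hp : (0 : ℝ) < ((2 : ℝ) ^ d) ^ (n - 1) := by positivity
      nlinarith [hB, hp]
    have : (T.card : ℝ) < (2 : ℝ) ^ d * ((2 : ℝ) ^ d) ^ (n - 1) := by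
      refine lt_of_le_of_lt ?_ key
      calc (T.card : ℝ) ≤ ((n ^ 2 * (B.card * (2 ^ d) ^ (n - 1)) : ℕ) : ℝ) := by
            exact_mod_cast hcardT
        _ = (n : ℝ) ^ 2 * ((B.card : ℝ) * ((2 : ℝ) ^ d) ^ (n - 1)) := by push_cast; ring
    exact_mod_cast this
  have hne : Tᶜ.Nonempty := by
    rw [← Finset.card_pos, Finset.card_compl]
    rw [Finset.card_univ] at hlt
    omega
  obtain ⟨p, hp⟩ := hne
  refine ⟨p, fun i j hij hm => ?_⟩
  exact (Finset.mem_compl.1 hp) (Finset.mem_filter.2 ⟨Finset.mem_univ _, ⟨i, j, hij, hm⟩⟩)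

end JLAux

open scoped RealInnerProductSpace

/-- Johnson–Lindenstrauss-type near-orthogonality: for any `n > 2` and `ε ∈ (0,1)`,
there exist `n` unit vectors in `ℝ^d`, `d = ⌈8 ln n / ε²⌉`, with pairwise inner
products of absolute value at most `ε`. -/
theorem stmt_0 (n : ℕ) (hn : 2 < n) (ε : ℝ) (hε : ε ∈ Set.Ioo (0 : ℝ) 1) :
    ∃ p : Fin n → EuclideanSpace ℝ (Fin ⌈8 * Real.log n / ε ^ 2⌉₊),
      (∀ i, ‖p i‖ = 1) ∧ ∀ i j, i ≠ j → |⟪p i, p j⟫| ≤ ε := by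
  classical
  obtain ⟨hε0, hε1⟩ := hε
  set d := ⌈8 * Real.log n / ε ^ 2⌉₊ with hd
  have hn3 : (3 : ℝ) ≤ (n : ℝ) := by exact_mod_cast hn
  have hlogpos : 0 < Real.log n := Real.log_pos (by linarith)
  have hdpos : 0 < d := Nat.ceil_pos.2 (by positivity)
  have hdge : 8 * Real.log n / ε ^ 2 ≤ (d : ℝ) := Nat.le_ceil _
  have hεd : 8 * Real.log n ≤ ε ^ 2 * d := by
    rw [div_le_iff₀ (by positivity)] at hdge
    linarith
  set B : Finset (Fin d → Bool) :=
    univ.filter (fun z => ε * d ≤ |JLAux.Ssum d z|) with hB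
  have htail := JLAux.tail_abs d (ε * d) ε hε0.le
  have hcosh : Real.exp ε + Real.exp (-ε) ≤ 2 * Real.exp (ε ^ 2 / 2) := by
    have h := Real.cosh_le_exp_half_sq ε
    rw [Real.cosh_eq] at h
    linarith
  have hEd : (Real.exp ε + Real.exp (-ε)) ^ d ≤ 2 ^ d * Real.exp ((d : ℝ) * (ε ^ 2 / 2)) := by
    calc (Real.exp ε + Real.exp (-ε)) ^ d ≤ (2 * Real.exp (ε ^ 2 / 2)) ^ d :=
          pow_le_pow_left₀ (by positivity) hcosh d
      _ = 2 ^ d * Real.exp ((d : ℝ) * (ε ^ 2 / 2)) := by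
          rw [mul_pow, ← Real.exp_nat_mul]
  have hB1 : (B.card : ℝ) ≤ 2 * 2 ^ d * Real.exp (-(ε ^ 2 * d / 2)) := by
    have hexp : Real.exp ((d : ℝ) * (ε ^ 2 / 2)) / Real.exp (ε * (ε * d))
        = Real.exp (-(ε ^ 2 * d / 2)) := by
      rw [← Real.exp_sub]
      congr 1
      ring
    have h3 : (B.card : ℝ) * Real.exp (ε * (ε * d))
        ≤ 2 * 2 ^ d * Real.exp ((d : ℝ) * (ε ^ 2 / 2)) := by
      calc (B.card : ℝ) * Real.exp (ε * (ε * d)) ≤ 2 * (Real.exp ε + Real.exp (-ε)) ^ d := htail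
        _ ≤ 2 * (2 ^ d * Real.exp ((d : ℝ) * (ε ^ 2 / 2))) := by linarith
        _ = 2 * 2 ^ d * Real.exp ((d : ℝ) * (ε ^ 2 / 2)) := by ring
    have h4 : (B.card : ℝ) ≤ 2 * 2 ^ d * Real.exp ((d : ℝ) * (ε ^ 2 / 2))
        / Real.exp (ε * (ε * d)) := (le_div_iff₀ (Real.exp_pos _)).2 h3
    rwa [mul_div_assoc, hexp] at h4
  have hexp2 : Real.exp (-(ε ^ 2 * d / 2)) ≤ 1 / (n : ℝ) ^ 4 := by
    have h1 : Real.exp (-(ε ^ 2 * d / 2)) ≤ Real.exp (-(4 * Real.log n)) :=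
      Real.exp_le_exp.2 (by linarith)
    have h2 : Real.exp (-(4 * Real.log n)) = 1 / (n : ℝ) ^ 4 := by
      rw [Real.exp_neg, show (4 : ℝ) * Real.log n = (4 : ℕ) * Real.log n by norm_num,
        Real.exp_nat_mul, Real.exp_log (by linarith : (0 : ℝ) < n), one_div]
    rw [h2] at h1
    exact h1
  have hBfin : (B.card : ℝ) * (n : ℝ) ^ 2 < (2 : ℝ) ^ d := by
    have hn4 : (0 : ℝ) < (n : ℝ) ^ 4 := by positivity
    have h2d : (0 : ℝ) < (2 : ℝ) ^ d := by positivity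
    have hBc : (B.card : ℝ) ≤ 2 * 2 ^ d * (1 / (n : ℝ) ^ 4) := by
      calc (B.card : ℝ) ≤ 2 * 2 ^ d * Real.exp (-(ε ^ 2 * d / 2)) := hB1
        _ ≤ 2 * 2 ^ d * (1 / (n : ℝ) ^ 4) := by
            have := mul_le_mul_of_nonneg_left hexp2 (by positivity : (0:ℝ) ≤ 2 * 2 ^ d)
            linarith
    have key : 2 * (2 : ℝ) ^ d * (1 / (n : ℝ) ^ 4) * (n : ℝ) ^ 2 < (2 : ℝ) ^ d := by
      have h9 : (9 : ℝ) ≤ (n : ℝ) ^ 2 := by nlinarith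
      have he1 : 2 * (2 : ℝ) ^ d * (1 / (n : ℝ) ^ 4) * (n : ℝ) ^ 2
          = 2 * (2 : ℝ) ^ d * ((n : ℝ) ^ 2 / (n : ℝ) ^ 4) := by ring
      have he2 : (n : ℝ) ^ 2 / (n : ℝ) ^ 4 = 1 / (n : ℝ) ^ 2 := by
        have hne : (n : ℝ) ≠ 0 := by positivity
        field_simp
      rw [he1, he2, mul_one_div, div_lt_iff₀ (by positivity : (0:ℝ) < (n:ℝ)^2)]
      nlinarith
    nlinarith [sq_nonneg ((n : ℝ)), Nat.cast_nonneg (α := ℝ) B.card]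
  obtain ⟨p, hp⟩ := JLAux.exists_good d n (by omega) B hBfin
  have hgood : ∀ i j : Fin n, i ≠ j →
      |JLAux.Ssum d (fun t => p i t == p j t)| < ε * d := by
    intro i j hij
    have := hp i j hij
    rw [hB, Finset.mem_filter] at this
    push_neg at this
    exact this (Finset.mem_univ _)
  set q : Fin n → EuclideanSpace ℝ (Fin d) :=
    fun i => WithLp.toLp 2 (fun k => JLAux.sg (p i k) / Real.sqrt d) with hq
  have hdR : (0 : ℝ) < (d : ℝ) := by exact_mod_cast hdpos
  refine ⟨q, ?_, ?_⟩
  · intro i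
    rw [EuclideanSpace.norm_eq]
    have hterm : ∀ k : Fin d, ‖q i k‖ ^ 2 = 1 / (d : ℝ) := by
      intro k
      rw [hq]
      simp only [PiLp.toLp_apply, Real.norm_eq_abs, sq_abs]
      rw [div_pow, JLAux.sg_sq, Real.sq_sqrt hdR.le]
    rw [Finset.sum_congr rfl (fun k _ => hterm k), Finset.sum_const, Finset.card_univ,
      Fintype.card_fin, nsmul_eq_mul, mul_one_div, div_self hdR.ne', Real.sqrt_one]
  · intro i j hij
    have hinner : ⟪q i, q j⟫ = JLAux.Ssum d (fun t => p i t == p j t) / d := by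
      rw [PiLp.inner_apply]
      have hterm : ∀ k : Fin d, ⟪q i k, q j k⟫
          = JLAux.sg (p i k == p j k) / d := by
        intro k
        rw [hq]
        simp only [PiLp.toLp_apply, RCLike.inner_apply, conj_trivial]
        rw [div_mul_div_comm, mul_comm (JLAux.sg (p j k)), JLAux.sg_mul, Real.mul_self_sqrt hdR.le]
      rw [Finset.sum_congr rfl (fun k _ => hterm k), ← Finset.sum_div]
      rfl
    rw [hinner, abs_div, abs_of_pos hdR, div_le_iff₀ hdR]
    have := hgood i j hij
    linarith [this]
end

section
/- Let u be a vector drawn uniformly at random from the unit sphere in ℝ^d and let β ≥ 6. Then the probability that the square of the first coordinate of u exceeds β/d is at most exp(-β/4). -/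
open MeasureTheory

open Metric Set RealInnerProductSpace
open scoped Pointwise ENNReal

private lemma coord_sq_le_norm_sq' {d : ℕ} (x : EuclideanSpace ℝ (Fin d)) (i : Fin d) :
    (x i)^2 ≤ ‖x‖^2 := by
  rw [EuclideanSpace.norm_eq, Real.sq_sqrt (by positivity)]
  calc (x i)^2 = ‖x i‖^2 := by rw [Real.norm_eq_abs, sq_abs]
  _ ≤ ∑ j, ‖x j‖^2 := Finset.single_le_sum (f := fun j => ‖x j‖^2) (fun j _ => by positivity) (Finset.mem_univ i)

private lemma quad_le_aux {s t r ρ a : ℝ} (hs : 0 ≤ s) (ht : 0 < t)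
    (h1 : s^2 ≤ r^2) (h2 : 1 - 2*s*t + s^2 ≤ r^2) (hρ0 : 0 ≤ ρ) (hρ1 : ρ < 1)
    (ha : t*ρ ≤ a) : ρ^2 - 2*(s*a) + s^2 ≤ r^2 := by
  have hsa : s * (t * ρ) ≤ s * a := mul_le_mul_of_nonneg_left ha hs
  rcases le_or_gt ρ (2*s*t) with hcase | hcase
  · nlinarith
  · nlinarith

private lemma le_of_sq_le_sq' {n r : ℝ} (hn : 0 ≤ n) (hr : 0 ≤ r) (h : n^2 ≤ r^2) : n ≤ r := by
  nlinarith


/-- The uniform probability measure on the unit sphere `S^{d-1} ⊂ ℝ^d`: the normalized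
surface (Haar-derived) measure. -/
noncomputable def uniformSphere (d : ℕ) :
    Measure (Metric.sphere (0 : EuclideanSpace ℝ (Fin d)) 1) :=
  ((volume : Measure (EuclideanSpace ℝ (Fin d))).toSphere Set.univ)⁻¹ •
    (volume : Measure (EuclideanSpace ℝ (Fin d))).toSphere

set_option maxHeartbeats 800000 in
private lemma key_lemma (d : ℕ) (hd : 0 < d) (β : ℝ) (hβ0 : 0 < β) (s r : ℝ)
    (hs : 0 ≤ s) (hr : 0 < r)
    (h1 : s^2 ≤ r^2) (h2 : 1 - 2*s*Real.sqrt (β/d) + s^2 ≤ r^2)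
    (hfin : 2 * r ^ d ≤ Real.exp (-β/4)) :
    uniformSphere d {u | β / d < ((u : EuclideanSpace ℝ (Fin d)) ⟨0, hd⟩) ^ 2} ≤
      ENNReal.ofReal (Real.exp (-β / 4)) := by
  have hdR : (0:ℝ) < d := Nat.cast_pos.mpr hd
  set i0 : Fin d := ⟨0, hd⟩ with hi0
  set t := Real.sqrt (β/d) with ht
  have ht0 : 0 < t := Real.sqrt_pos.mpr (by positivity)
  have ht2 : t^2 = β/d := Real.sq_sqrt (by positivity)
  set e0 : EuclideanSpace ℝ (Fin d) := EuclideanSpace.single i0 (1:ℝ) with he0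
  set S : Set (sphere (0 : EuclideanSpace ℝ (Fin d)) 1) :=
    {u | β / d < ((u : EuclideanSpace ℝ (Fin d)) i0) ^ 2} with hS
  have hSm : MeasurableSet S := by
    apply measurableSet_lt measurable_const
    exact ((EuclideanSpace.proj i0 : EuclideanSpace ℝ (Fin d) →L[ℝ] ℝ).continuous.measurable.comp measurable_subtype_coe).pow_const 2
  -- containment of the cone in two balls
  have hsub : Set.Ioo (0:ℝ) 1 • (Subtype.val '' S) ⊆
      closedBall (s • e0) r ∪ closedBall (-(s • e0)) r := by
    intro x hx
    rw [Set.mem_smul] at hx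
    obtain ⟨c, hc, y, ⟨u, hu, rfl⟩, rfl⟩ := hx
    have hu1 : ‖(u : EuclideanSpace ℝ (Fin d))‖ = 1 := mem_sphere_zero_iff_norm.mp u.2
    set x : EuclideanSpace ℝ (Fin d) := c • (u : EuclideanSpace ℝ (Fin d)) with hx
    have hnx : ‖x‖ = c := by
      rw [hx, norm_smul, hu1, mul_one, Real.norm_eq_abs, abs_of_pos hc.1]
    have hx0 : x i0 = c * (u : EuclideanSpace ℝ (Fin d)) i0 := rfl
    have hu0 : β / d < ((u : EuclideanSpace ℝ (Fin d)) i0) ^ 2 := hu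
    have hxsq : t * ‖x‖ < |x i0| := by
      have h : (t * ‖x‖)^2 < |x i0|^2 := by
        rw [sq_abs, hnx, hx0, mul_pow, mul_pow, ht2]
        nlinarith [hu0, pow_pos hc.1 2]
      exact lt_of_pow_lt_pow_left₀ 2 (abs_nonneg (x i0)) h
    have hxle : ‖x‖ < 1 := by rw [hnx]; exact hc.2
    have hxnn : 0 ≤ ‖x‖ := norm_nonneg x
    have hse0 : ‖s • e0‖ = s := by
      rw [norm_smul, he0, EuclideanSpace.norm_single, norm_one, mul_one,
        Real.norm_eq_abs, abs_of_nonneg hs]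
    have hinner : (inner ℝ x (s • e0) : ℝ) = s * x i0 := by
      rw [real_inner_smul_right, he0, EuclideanSpace.inner_single_right]
      simp [mul_comm, starRingEnd_apply]
    rcases le_or_gt 0 (x i0) with hsgn | hsgn
    · left
      rw [mem_closedBall, dist_eq_norm]
      have habs : t * ‖x‖ < x i0 := by rwa [abs_of_nonneg hsgn] at hxsq
      have hexp : ‖x - s • e0‖^2 = ‖x‖^2 - 2*(s * x i0) + s^2 := by
        rw [norm_sub_sq_real, hinner, hse0]
      have hq : ‖x - s • e0‖^2 ≤ r^2 := by
        rw [hexp]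
        exact quad_le_aux hs ht0 h1 h2 hxnn hxle habs.le
      exact le_of_sq_le_sq' (norm_nonneg _) hr.le hq
    · right
      rw [mem_closedBall, dist_eq_norm, sub_neg_eq_add]
      have habs : t * ‖x‖ < -(x i0) := by rwa [abs_of_neg hsgn] at hxsq
      have hexp : ‖x + s • e0‖^2 = ‖x‖^2 + 2*(s * x i0) + s^2 := by
        rw [norm_add_sq_real, hinner, hse0]
      have hq : ‖x + s • e0‖^2 ≤ r^2 := by
        have : ‖x‖^2 + 2*(s * x i0) + s^2 = ‖x‖^2 - 2*(s * (-(x i0))) + s^2 := by ring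
        rw [hexp, this]
        exact quad_le_aux hs ht0 h1 h2 hxnn hxle habs.le
      exact le_of_sq_le_sq' (norm_nonneg _) hr.le hq
  -- volume computation
  set V := volume (ball (0 : EuclideanSpace ℝ (Fin d)) 1) with hV
  have hV0 : V ≠ 0 := (measure_ball_pos _ _ one_pos).ne'
  have hVtop : V ≠ ⊤ := measure_ball_lt_top.ne
  have hvol : volume (Set.Ioo (0:ℝ) 1 • (Subtype.val '' S)) ≤
      ENNReal.ofReal (Real.exp (-β/4)) * V := by
    refine le_trans (measure_mono hsub) (le_trans (measure_union_le _ _) ?_)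
    rw [Measure.addHaar_closedBall _ _ hr.le, Measure.addHaar_closedBall _ _ hr.le,
      finrank_euclideanSpace_fin]
    rw [← add_mul, ← two_mul]
    have h2r : (2:ℝ≥0∞) * ENNReal.ofReal (r ^ d) ≤ ENNReal.ofReal (Real.exp (-β/4)) := by
      rw [show (2:ℝ≥0∞) = ENNReal.ofReal 2 by simp, ← ENNReal.ofReal_mul (by norm_num)]
      exact ENNReal.ofReal_le_ofReal hfin
    exact mul_le_mul_left h2r _
  show uniformSphere d S ≤ _
  rw [uniformSphere, Measure.smul_apply, smul_eq_mul,
    Measure.toSphere_apply' _ hSm, Measure.toSphere_apply_univ, finrank_euclideanSpace_fin]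
  have hdV0 : ((d:ℝ≥0∞) * V) ≠ 0 :=
    mul_ne_zero (Nat.cast_ne_zero.mpr hd.ne') hV0
  have hdVtop : ((d:ℝ≥0∞) * V) ≠ ⊤ := ENNReal.mul_ne_top (ENNReal.natCast_ne_top d) hVtop
  calc ((d:ℝ≥0∞) * V)⁻¹ * ((d:ℝ≥0∞) * volume (Set.Ioo (0:ℝ) 1 • (Subtype.val '' S)))
      ≤ ((d:ℝ≥0∞) * V)⁻¹ * ((d:ℝ≥0∞) * (ENNReal.ofReal (Real.exp (-β/4)) * V)) := by
        exact mul_le_mul_right (mul_le_mul_right hvol _) _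
    _ = ENNReal.ofReal (Real.exp (-β/4)) * (((d:ℝ≥0∞) * V)⁻¹ * ((d:ℝ≥0∞) * V)) := by ring
    _ = ENNReal.ofReal (Real.exp (-β/4)) := by
        rw [ENNReal.inv_mul_cancel hdV0 hdVtop, mul_one]
    _ ≤ ENNReal.ofReal (Real.exp (-β/4)) := le_refl _

/-- Tail bound for a random unit vector: if `u` is uniform on the unit sphere in `ℝ^d`
and `β ≥ 6`, then `Pr[u₁² > β/d] ≤ exp(−β/4)`. -/
theorem stmt_1 (d : ℕ) (hd : 0 < d) (β : ℝ) (hβ : 6 ≤ β) :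
    uniformSphere d {u | β / d < ((u : EuclideanSpace ℝ (Fin d)) ⟨0, hd⟩) ^ 2} ≤
      ENNReal.ofReal (Real.exp (-β / 4)) := by
  have hdR : (0:ℝ) < d := Nat.cast_pos.mpr hd
  rcases le_or_gt (d:ℝ) β with hdβ | hdβ
  · -- the event is empty since u₀² ≤ 1 ≤ β/d
    have hset : {u : sphere (0 : EuclideanSpace ℝ (Fin d)) 1 |
        β / d < ((u : EuclideanSpace ℝ (Fin d)) ⟨0, hd⟩) ^ 2} = ∅ := by
      ext u
      simp only [Set.mem_setOf_eq, Set.mem_empty_iff_false, iff_false, not_lt]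
      have h1 : ‖(u : EuclideanSpace ℝ (Fin d))‖ = 1 := mem_sphere_zero_iff_norm.mp u.2
      have h2 := coord_sq_le_norm_sq' (u : EuclideanSpace ℝ (Fin d)) ⟨0, hd⟩
      rw [h1] at h2
      have h3 : (1:ℝ) ≤ β / d := (le_div_iff₀ hdR).mpr (by linarith)
      nlinarith
    rw [hset, measure_empty]
    exact zero_le
  · have hβ0 : (0:ℝ) < β := by linarith
    have hx1 : β / d < 1 := (div_lt_one hdR).mpr hdβ
    have hx0 : 0 < β / d := by positivity
    have hdx : (d:ℝ) * (β / d) = β := by field_simp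
    rcases le_or_gt (β / d) (1/2) with hc | hc
    · -- regime 1 : s = t = √(β/d), r = √(1-β/d)
      have hy : 0 < 1 - β / d := by linarith
      refine key_lemma d hd β hβ0 (Real.sqrt (β / d)) (Real.sqrt (1 - β / d))
        (Real.sqrt_nonneg _) (Real.sqrt_pos.mpr hy) ?_ ?_ ?_
      · rw [Real.sq_sqrt hx0.le, Real.sq_sqrt hy.le]; linarith
      · rw [Real.sq_sqrt hx0.le, Real.sq_sqrt hy.le]
        have h : 2 * Real.sqrt (β / d) * Real.sqrt (β / d) = 2 * (β / d) := by
          rw [mul_assoc, Real.mul_self_sqrt hx0.le]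
        rw [h]; linarith
      · set r := Real.sqrt (1 - β / d) with hrdef
        have hr : 0 < r := Real.sqrt_pos.mpr hy
        have hkey : 2 * r ^ d = Real.exp (Real.log 2 + d * Real.log r) := by
          rw [Real.exp_add, Real.exp_log two_pos, Real.exp_nat_mul, Real.exp_log hr]
        rw [hkey]
        apply Real.exp_le_exp.mpr
        have hlogr : Real.log r = Real.log (1 - β / d) / 2 := Real.log_sqrt hy.le
        have hlog1 : Real.log (1 - β / d) ≤ -(β / d) := by
          have := Real.log_le_sub_one_of_pos hy; linarith
        have hdlog : (d:ℝ) * Real.log r ≤ -β / 2 := by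
          rw [hlogr]
          have h := mul_le_mul_of_nonneg_left hlog1 (by positivity : (0:ℝ) ≤ (d:ℝ)/2)
          calc (d:ℝ) * (Real.log (1 - β / d) / 2) = (d:ℝ)/2 * Real.log (1 - β / d) := by ring
            _ ≤ (d:ℝ)/2 * (-(β / d)) := h
            _ = -((d:ℝ) * (β / d)) / 2 := by ring
            _ = -β / 2 := by rw [hdx]
        have hl2 : Real.log 2 < 0.6931471808 := Real.log_two_lt_d9
        linarith
    · -- regime 2 : s = r = 1/(2√(β/d))
      have hd7 : (7:ℝ) ≤ d := by
        have h6 : (6:ℕ) < d := by exact_mod_cast lt_of_le_of_lt hβ hdβ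
        exact_mod_cast Nat.succ_le_of_lt h6
      have ht0 : 0 < Real.sqrt (β / d) := Real.sqrt_pos.mpr hx0
      set t := Real.sqrt (β / d) with htdef
      have ht2 : t ^ 2 = β / d := Real.sq_sqrt hx0.le
      have hs0 : (0:ℝ) < 1/(2*t) := by positivity
      refine key_lemma d hd β hβ0 (1/(2*t)) (1/(2*t)) hs0.le hs0 le_rfl ?_ ?_
      · have h : 2 * (1/(2*t)) * t = 1 := by field_simp
        rw [h]; norm_num
      · set r := 1/(2*t) with hrdef
        have hr : 0 < r := hs0
        have hkey : 2 * r ^ d = Real.exp (Real.log 2 + d * Real.log r) := by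
          rw [Real.exp_add, Real.exp_log two_pos, Real.exp_nat_mul, Real.exp_log hr]
        rw [hkey]
        apply Real.exp_le_exp.mpr
        have hlogr : Real.log r = -(Real.log 2 + Real.log (β / d) / 2) := by
          rw [hrdef, one_div, Real.log_inv, Real.log_mul two_ne_zero ht0.ne', htdef,
            Real.log_sqrt hx0.le]
        have hlogx : β / d / 2 - 1/4 - Real.log 2 ≤ Real.log (β / d) := by
          have hpos : (0:ℝ) < (2*(β / d))⁻¹ := by positivity
          have h := Real.log_le_sub_one_of_pos hpos
          rw [Real.log_inv] at h
          have hmul : Real.log (2*(β / d)) = Real.log 2 + Real.log (β / d) :=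
            Real.log_mul two_ne_zero hx0.ne'
          have hfactor : 1 - (2*(β / d))⁻¹ - ((β / d)/2 - 1/4) =
              ((β / d) - 1/2)*(2 - (β / d))/(2*(β / d)) := by
            field_simp; ring
          have hnn : 0 ≤ ((β / d) - 1/2)*(2 - (β / d))/(2*(β / d)) := by
            apply div_nonneg _ (by positivity)
            nlinarith
          linarith
        rw [hlogr]
        have hmono := mul_le_mul_of_nonneg_left hlogx (by positivity : (0:ℝ) ≤ (d:ℝ)/2)
        have hl2 : (0.6931471803:ℝ) < Real.log 2 := Real.log_two_gt_d9
        have hdineq : 7 * (Real.log 2/2 - 1/8) ≤ (d:ℝ) * (Real.log 2/2 - 1/8) :=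
          mul_le_mul_of_nonneg_right hd7 (by linarith)
        nlinarith [hmono, hdineq, hl2, hdx]
end

section
/- Let n > 2 and ε ∈ (0,1). Then the ε-rank of the n×n identity matrix is at most ⌈8 ln n / ε²⌉; that is, there exists a matrix Φ ∈ ℝ^{n×d} with d = ⌈8 ln n / ε²⌉ such that every entry of I_n − ΦΦᵀ has absolute value at most ε. -/
open Finset Real

noncomputable def sgn (b : Bool) : ℝ := if b then 1 else -1

lemma sgn_mul_self (b : Bool) : sgn b * sgn b = 1 := by cases b <;> simp [sgn]

lemma sgn_mul (b c : Bool) : sgn b * sgn c = sgn (b == c) := by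
  cases b <;> cases c <;> norm_num [sgn]

lemma sgn_not (b : Bool) : sgn (!b) = -sgn b := by cases b <;> simp [sgn]

lemma tail_one (d : ℕ) (ε : ℝ) (hε : 0 < ε) :
    ((univ.filter (fun x : Fin d → Bool => ε * d ≤ ∑ i, sgn (x i))).card : ℝ)
      ≤ 2 ^ d * Real.exp (-(ε ^ 2 * d) / 2) := by
  set F := univ.filter (fun x : Fin d → Bool => ε * d ≤ ∑ i, sgn (x i)) with hF
  have h1 : (F.card : ℝ) * Real.exp (ε * (ε * d))
      ≤ ∑ x : Fin d → Bool, Real.exp (ε * ∑ i, sgn (x i)) := by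
    calc (F.card : ℝ) * Real.exp (ε * (ε * d)) = ∑ _x ∈ F, Real.exp (ε * (ε * d)) := by
          rw [Finset.sum_const, nsmul_eq_mul]
      _ ≤ ∑ x ∈ F, Real.exp (ε * ∑ i, sgn (x i)) := by
          refine Finset.sum_le_sum fun x hx => ?_
          have := (Finset.mem_filter.mp hx).2
          exact Real.exp_le_exp.mpr (by nlinarith)
      _ ≤ ∑ x : Fin d → Bool, Real.exp (ε * ∑ i, sgn (x i)) :=
          Finset.sum_le_sum_of_subset_of_nonneg (Finset.filter_subset _ _)
            (fun _ _ _ => (Real.exp_pos _).le)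
  have h2 : ∑ x : Fin d → Bool, Real.exp (ε * ∑ i, sgn (x i))
      = (Real.exp ε + Real.exp (-ε)) ^ d := by
    have : ∀ x : Fin d → Bool, Real.exp (ε * ∑ i, sgn (x i))
        = ∏ i : Fin d, Real.exp (ε * sgn (x i)) := by
      intro x; rw [← Real.exp_sum, Finset.mul_sum]
    simp_rw [this]
    rw [← Fintype.piFinset_univ,
      Finset.sum_prod_piFinset (univ : Finset Bool) (fun (_ : Fin d) b => Real.exp (ε * sgn b))]
    have : ∀ i : Fin d, ∑ b ∈ (univ : Finset Bool), Real.exp (ε * sgn b)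
        = Real.exp ε + Real.exp (-ε) := by
      intro i
      simp [sgn, Fintype.sum_bool, mul_comm]
    rw [Finset.prod_congr rfl fun i _ => this i, Finset.prod_const, Finset.card_univ,
      Fintype.card_fin]
  have h3 : (Real.exp ε + Real.exp (-ε)) ^ d ≤ 2 ^ d * Real.exp (ε ^ 2 * d / 2) := by
    have hc : Real.exp ε + Real.exp (-ε) ≤ 2 * Real.exp (ε ^ 2 / 2) := by
      have := Real.cosh_le_exp_half_sq ε
      rw [Real.cosh_eq] at this
      nlinarith [Real.exp_pos (ε ^ 2 / 2)]
    calc (Real.exp ε + Real.exp (-ε)) ^ d ≤ (2 * Real.exp (ε ^ 2 / 2)) ^ d := by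
          apply pow_le_pow_left₀ (by positivity) hc
      _ = 2 ^ d * Real.exp (ε ^ 2 * d / 2) := by
          rw [mul_pow, ← Real.exp_nat_mul]; ring_nf
  have hE : (0:ℝ) < Real.exp (ε * (ε * d)) := Real.exp_pos _
  have h4 : ∑ x : Fin d → Bool, Real.exp (ε * ∑ i, sgn (x i))
      ≤ 2 ^ d * Real.exp (ε ^ 2 * d / 2) := h2 ▸ h3
  rw [← le_div_iff₀ hE] at h1
  calc (F.card : ℝ) ≤ (∑ x : Fin d → Bool, Real.exp (ε * ∑ i, sgn (x i)))
        / Real.exp (ε * (ε * d)) := h1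
    _ ≤ (2 ^ d * Real.exp (ε ^ 2 * d / 2)) / Real.exp (ε * (ε * d)) := by
        gcongr
    _ = 2 ^ d * Real.exp (-(ε ^ 2 * d) / 2) := by
        rw [div_eq_iff hE.ne', mul_assoc, ← Real.exp_add]; ring_nf

lemma tail_abs (d : ℕ) (ε : ℝ) (hε : 0 < ε) :
    ((univ.filter (fun x : Fin d → Bool => ε * d < |∑ i, sgn (x i)|)).card : ℝ)
      ≤ 2 ^ (d + 1) * Real.exp (-(ε ^ 2 * d) / 2) := by
  set Fp := univ.filter (fun x : Fin d → Bool => ε * d ≤ ∑ i, sgn (x i)) with hFp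
  set Fm := univ.filter (fun x : Fin d → Bool => ε * d ≤ -∑ i, sgn (x i)) with hFm
  have hsub : univ.filter (fun x : Fin d → Bool => ε * d < |∑ i, sgn (x i)|) ⊆ Fp ∪ Fm := by
    intro x hx
    have hx' := (Finset.mem_filter.mp hx).2
    rcases abs_cases (∑ i, sgn (x i)) with ⟨h, _⟩ | ⟨h, _⟩
    · exact Finset.mem_union_left _ (Finset.mem_filter.mpr ⟨Finset.mem_univ _, by linarith⟩)
    · exact Finset.mem_union_right _ (Finset.mem_filter.mpr ⟨Finset.mem_univ _, by linarith⟩)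
  have hcardm : Fm.card ≤ Fp.card := by
    apply Finset.card_le_card_of_injOn (fun x => fun i => !(x i))
    · intro x hx
      have hx' := (Finset.mem_filter.mp hx).2
      refine Finset.mem_filter.mpr ⟨Finset.mem_univ _, ?_⟩
      have : ∑ i, sgn (!(x i)) = -∑ i, sgn (x i) := by
        simp [sgn_not]
      rw [this]; linarith
    · intro x _ y _ hxy
      funext i
      have := congrFun hxy i
      simpa using this
  calc ((univ.filter (fun x : Fin d → Bool => ε * d < |∑ i, sgn (x i)|)).card : ℝ)
      ≤ ((Fp ∪ Fm).card : ℝ) := by exact_mod_cast Finset.card_le_card hsub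
    _ ≤ (Fp.card : ℝ) + (Fm.card : ℝ) := by exact_mod_cast Finset.card_union_le _ _
    _ ≤ 2 * (Fp.card : ℝ) := by linarith [(Nat.cast_le (α := ℝ)).mpr hcardm]
    _ ≤ 2 * (2 ^ d * Real.exp (-(ε ^ 2 * d) / 2)) := by
        have := tail_one d ε hε
        linarith
    _ = 2 ^ (d + 1) * Real.exp (-(ε ^ 2 * d) / 2) := by ring

lemma corr_eq (d : ℕ) (u w : Fin d → Bool) :
    ∑ i, sgn (u i) * sgn (w i) = ∑ i, sgn (u i == w i) := by
  simp_rw [sgn_mul]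

lemma bad_card (d : ℕ) (ε : ℝ) (hε : 0 < ε) (u : Fin d → Bool) :
    (((univ.filter (fun w : Fin d → Bool =>
        ε * d < |∑ i, sgn (u i) * sgn (w i)|)).card : ℝ))
      ≤ 2 ^ (d + 1) * Real.exp (-(ε ^ 2 * d) / 2) := by
  refine le_trans ?_ (tail_abs d ε hε)
  have : (univ.filter (fun w : Fin d → Bool =>
      ε * d < |∑ i, sgn (u i) * sgn (w i)|)).card
      ≤ (univ.filter (fun x : Fin d → Bool => ε * d < |∑ i, sgn (x i)|)).card := by
    apply Finset.card_le_card_of_injOn (fun w => fun i => (u i == w i))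
    · intro w hw
      have hw' := (Finset.mem_filter.mp hw).2
      refine Finset.mem_filter.mpr ⟨Finset.mem_univ _, ?_⟩
      rwa [corr_eq] at hw'
    · intro w _ w' _ h
      funext i
      have := congrFun h i
      cases hu : u i <;> cases hw : w i <;> cases hw' : w' i <;>
        simp_all
  exact_mod_cast this

lemma greedy (d : ℕ) (hd : 0 < d) (ε : ℝ) (hε0 : 0 < ε) (hε1 : ε < 1) (n : ℕ)
    (hcount : ∀ m : ℕ, m < n →
      (m : ℝ) * (2 ^ (d + 1) * Real.exp (-(ε ^ 2 * d) / 2)) < 2 ^ d) :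
    ∃ T : Finset (Fin d → Bool), T.card = n ∧
      ∀ u ∈ T, ∀ v ∈ T, u ≠ v → |∑ i, sgn (u i) * sgn (v i)| ≤ ε * d := by
  induction n with
  | zero => exact ⟨∅, rfl, by simp⟩
  | succ m ih =>
    obtain ⟨T, hcard, hT⟩ := ih (fun k hk => hcount k (hk.trans (Nat.lt_succ_self m)))
    set Bad := T.biUnion (fun u => univ.filter (fun w : Fin d → Bool =>
      ε * d < |∑ i, sgn (u i) * sgn (w i)|)) with hBad
    have hbadcard : (Bad.card : ℝ) < 2 ^ d := by
      calc (Bad.card : ℝ)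
          ≤ ∑ u ∈ T, (((univ.filter (fun w : Fin d → Bool =>
              ε * d < |∑ i, sgn (u i) * sgn (w i)|)).card : ℝ)) := by
            exact_mod_cast Finset.card_biUnion_le
        _ ≤ ∑ _u ∈ T, 2 ^ (d + 1) * Real.exp (-(ε ^ 2 * d) / 2) :=
            Finset.sum_le_sum fun u _ => bad_card d ε hε0 u
        _ = (m : ℝ) * (2 ^ (d + 1) * Real.exp (-(ε ^ 2 * d) / 2)) := by
            rw [Finset.sum_const, hcard, nsmul_eq_mul]
        _ < 2 ^ d := hcount m (Nat.lt_succ_self m)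
    have hex : ∃ w : Fin d → Bool, w ∉ Bad := by
      by_contra h
      push_neg at h
      have : Bad = univ := Finset.eq_univ_of_forall h
      rw [this, Finset.card_univ] at hbadcard
      simp [Fintype.card_fun] at hbadcard
    obtain ⟨w, hw⟩ := hex
    have hwgood : ∀ u ∈ T, |∑ i, sgn (u i) * sgn (w i)| ≤ ε * d := by
      intro u hu
      by_contra h
      push_neg at h
      exact hw (Finset.mem_biUnion.mpr ⟨u, hu,
        Finset.mem_filter.mpr ⟨Finset.mem_univ _, h⟩⟩)
    have hwT : w ∉ T := by
      intro hwT
      have := hwgood w hwT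
      have hself : ∑ i, sgn (w i) * sgn (w i) = (d : ℝ) := by
        simp [sgn_mul_self]
      rw [hself] at this
      have hd1 : (1 : ℝ) ≤ (d : ℝ) := by exact_mod_cast hd
      rw [abs_of_pos (by linarith)] at this
      nlinarith
    refine ⟨insert w T, ?_, ?_⟩
    · rw [Finset.card_insert_of_notMem hwT, hcard]
    · intro u hu v hv huv
      rcases Finset.mem_insert.mp hu with hu' | hu' <;>
        rcases Finset.mem_insert.mp hv with hv' | hv'
      · exact absurd (hu'.trans hv'.symm) huv
      · subst hu'
        have := hwgood v hv'
        rwa [show ∑ i, sgn (u i) * sgn (v i) = ∑ i, sgn (v i) * sgn (u i) by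
          simp_rw [mul_comm]]
      · subst hv'
        exact hwgood u hu'
      · exact hT u hu' v hv' huv

/-- The `ε`-rank of the `n × n` identity matrix is at most `⌈8 ln n / ε²⌉`:
there is `Φ ∈ ℝ^{n×d}`, `d = ⌈8 ln n / ε²⌉`, with every entry of `I − ΦΦᵀ`
of absolute value at most `ε`. -/
theorem stmt_7 (n : ℕ) (hn : 2 < n) (ε : ℝ) (hε : ε ∈ Set.Ioo (0 : ℝ) 1) :
    ∃ Φ : Matrix (Fin n) (Fin ⌈8 * Real.log n / ε ^ 2⌉₊) ℝ,
      ∀ i j, |((1 : Matrix (Fin n) (Fin n) ℝ) - Φ * Φ.transpose) i j| ≤ ε := by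
  obtain ⟨hε0, hε1⟩ := hε
  set d := ⌈8 * Real.log n / ε ^ 2⌉₊ with hd_def
  have hn3 : (3 : ℝ) ≤ (n : ℝ) := by exact_mod_cast hn
  have hn1 : (1 : ℝ) < (n : ℝ) := by linarith
  have hlog : 0 < Real.log n := Real.log_pos hn1
  have hdpos : 0 < d := Nat.ceil_pos.mpr (by positivity)
  have hdge : 8 * Real.log n ≤ ε ^ 2 * d := by
    have h := Nat.le_ceil (8 * Real.log n / ε ^ 2)
    rw [div_le_iff₀ (by positivity)] at h
    calc 8 * Real.log n ≤ (d : ℝ) * ε ^ 2 := h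
      _ = ε ^ 2 * d := mul_comm _ _
  have hE : Real.exp (-(ε ^ 2 * d) / 2) ≤ 1 / (n : ℝ) ^ 4 := by
    have h1 : Real.exp (-(ε ^ 2 * d) / 2) ≤ Real.exp (-(4 * Real.log n)) :=
      Real.exp_le_exp.mpr (by linarith)
    have h2 : Real.exp (-(4 * Real.log n)) = 1 / (n : ℝ) ^ 4 := by
      rw [Real.exp_neg, show (4 : ℝ) * Real.log n = ((4 : ℕ) : ℝ) * Real.log n by norm_num,
        Real.exp_nat_mul, Real.exp_log (by linarith), one_div]
    linarith
  have hcount : ∀ m : ℕ, m < n →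
      (m : ℝ) * (2 ^ (d + 1) * Real.exp (-(ε ^ 2 * d) / 2)) < 2 ^ d := by
    intro m hm
    have hmn : (m : ℝ) ≤ (n : ℝ) - 1 := by
      have : (m : ℝ) + 1 ≤ n := by exact_mod_cast hm
      linarith
    have key : (2 : ℝ) * ((n : ℝ) - 1) < (n : ℝ) ^ 4 := by
      have h2 : 3 * (n : ℝ) ≤ (n : ℝ) ^ 2 := by nlinarith
      have h4 : 9 * (n : ℝ) ^ 2 ≤ (n : ℝ) ^ 4 := by nlinarith
      nlinarith
    calc (m : ℝ) * (2 ^ (d + 1) * Real.exp (-(ε ^ 2 * d) / 2))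
        ≤ ((n : ℝ) - 1) * (2 ^ (d + 1) * (1 / (n : ℝ) ^ 4)) := by
          apply mul_le_mul hmn (mul_le_mul_of_nonneg_left hE (by positivity))
            (by positivity) (by linarith)
      _ = 2 * ((n : ℝ) - 1) / (n : ℝ) ^ 4 * 2 ^ d := by rw [pow_succ]; ring
      _ < 1 * 2 ^ d := by
          apply mul_lt_mul_of_pos_right ?_ (by positivity)
          rw [div_lt_one (by positivity)]; exact key
      _ = 2 ^ d := one_mul _
  obtain ⟨T, hcard, hT⟩ := greedy d hdpos ε hε0 hε1 n hcount
  set f : Fin n → (Fin d → Bool) :=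
    fun i => (T.equivFin.symm (Fin.cast hcard.symm i) : Fin d → Bool) with hf_def
  have hfmem : ∀ i, f i ∈ T := fun i => (T.equivFin.symm (Fin.cast hcard.symm i)).2
  have hfinj : Function.Injective f := by
    intro i j hij
    have h1 : T.equivFin.symm (Fin.cast hcard.symm i)
        = T.equivFin.symm (Fin.cast hcard.symm j) := Subtype.ext hij
    have := T.equivFin.symm.injective h1
    simpa [Fin.ext_iff] using congrArg Fin.val this
  have hcorr : ∀ i j : Fin n, i ≠ j →
      |∑ k, sgn (f i k) * sgn (f j k)| ≤ ε * d :=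
    fun i j hij => hT _ (hfmem i) _ (hfmem j) (fun h => hij (hfinj h))
  have hdR : (0 : ℝ) < (d : ℝ) := by exact_mod_cast hdpos
  have hsq : Real.sqrt d * Real.sqrt d = (d : ℝ) := Real.mul_self_sqrt hdR.le
  refine ⟨fun i j => sgn (f i j) / Real.sqrt d, ?_⟩
  intro i j
  have hsum : ∀ i' j' : Fin n,
      ∑ k, sgn (f i' k) / Real.sqrt d * (sgn (f j' k) / Real.sqrt d)
        = (∑ k, sgn (f i' k) * sgn (f j' k)) / d := by
    intro i' j'
    rw [Finset.sum_div]
    refine Finset.sum_congr rfl fun k _ => ?_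
    rw [div_mul_div_comm, hsq]
  rw [Matrix.sub_apply]; erw [Matrix.mul_apply]
  simp only [Matrix.transpose_apply, Matrix.one_apply]
  erw [hsum i j]
  by_cases hij : i = j
  · subst hij
    have : ∑ k, sgn (f i k) * sgn (f i k) = (d : ℝ) := by simp [sgn_mul_self]
    rw [this, if_pos rfl, div_self hdR.ne']
    simpa using hε0.le
  · rw [if_neg hij, zero_sub, abs_neg, abs_div, abs_of_pos hdR, div_le_iff₀ hdR]
    exact (hcorr i j hij).trans_eq (by ring)
end

section
/- Let N ⊂ S^{d-1} be a set of points with pairwise Euclidean distances at least √ε for some ε ∈ (0,1). Then for every x ∈ N, the distance from x to the convex hull of N \ {x} is at least ε/2. -/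
open Classical

open scoped RealInnerProductSpace

/-- If `N ⊂ S^{d-1}` has pairwise distances at least `√ε`, then each `x ∈ N` is at
distance at least `ε/2` from the convex hull of `N \ {x}`. -/
theorem stmt_10 (d : ℕ) (ε : ℝ) (hε : ε ∈ Set.Ioo (0 : ℝ) 1)
    (N : Finset (EuclideanSpace ℝ (Fin d)))
    (hsphere : ∀ x ∈ N, ‖x‖ = 1)
    (hpack : ∀ x ∈ N, ∀ y ∈ N, x ≠ y → Real.sqrt ε ≤ ‖x - y‖) :
    ∀ x ∈ N, ENNReal.ofReal (ε / 2) ≤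
      EMetric.infEdist x (convexHull ℝ (↑(N.erase x) : Set (EuclideanSpace ℝ (Fin d)))) := by
  intro x hx
  have hx1 : ‖x‖ = 1 := hsphere x hx
  have key : ∀ p ∈ convexHull ℝ (↑(N.erase x) : Set (EuclideanSpace ℝ (Fin d))),
      ⟪x, p⟫ ≤ (1 : ℝ) - ε / 2 := by
    have hconv : Convex ℝ {p : EuclideanSpace ℝ (Fin d) | ⟪x, p⟫ ≤ (1 : ℝ) - ε / 2} :=
      convex_halfSpace_le ⟨fun a b => inner_add_right x a b,
        fun c a => real_inner_smul_right x a c⟩ _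
    intro p hp
    refine convexHull_min ?_ hconv hp
    intro y hy
    have hyN : y ∈ N := Finset.mem_of_mem_erase hy
    have hxy : x ≠ y := fun h => (Finset.ne_of_mem_erase hy) h.symm
    have hd : Real.sqrt ε ≤ ‖x - y‖ := hpack x hx y hyN hxy
    have hε2 : ε ≤ ‖x - y‖ ^ 2 := by
      have := Real.sq_sqrt hε.1.le
      nlinarith [Real.sqrt_nonneg ε, norm_nonneg (x - y)]
    have hy1 : ‖y‖ = 1 := hsphere y hyN
    have hns : ‖x - y‖ ^ 2 = ‖x‖ ^ 2 - 2 * ⟪x, y⟫ + ‖y‖ ^ 2 := norm_sub_sq_real x y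
    rw [hx1, hy1] at hns
    show ⟪x, y⟫ ≤ (1 : ℝ) - ε / 2
    nlinarith
  rw [EMetric.infEdist, EMetric.le_infEdist]
  intro p hp
  rw [edist_dist]
  apply ENNReal.ofReal_le_ofReal
  have h1 : (ε / 2 : ℝ) ≤ ⟪x, x - p⟫ := by
    rw [inner_sub_right, real_inner_self_eq_norm_sq, hx1]
    nlinarith [key p hp]
  have h2 : ⟪x, x - p⟫ ≤ ‖x - p‖ := by
    calc ⟪x, x - p⟫ ≤ ‖x‖ * ‖x - p‖ := real_inner_le_norm _ _
      _ = ‖x - p‖ := by rw [hx1, one_mul]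
  rw [dist_eq_norm]
  linarith
end
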